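/- Let T be a compact Hausdorff space equipped with a Radon measure μ, let A, B : T → M_n(ℂ) be continuous maps (written t ↦ A_t and t ↦ B_t) such that (A_t − A_s) ∘ (B_t − B_s) ≥ 0 for all s, t ∈ T (the synchronous Hadamard property), and let α : T → [0, ∞) be a measurable function with ∫_T α dμ < ∞. Then (∫_T α(s) dμ(s)) · ∫_T α(t)(A_t ∘ B_t) dμ(t) ≥ (∫_T α(t) A_t dμ(t)) ∘ (∫_T α(s) B_s dμ(s)), i.e., the difference of the two sides is a positive semidefinite matrix. -/

import Mathlib

open scoped Matrix ComplexOrder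
open MeasureTheory

attribute [local instance] Matrix.normedAddCommGroup Matrix.normedSpace

noncomputable instance matCENorm {n : ℕ} : ContinuousENorm (Matrix (Fin n) (Fin n) ℂ) :=
  SeminormedAddGroup.toContinuousENorm

instance matPMS {n : ℕ} : TopologicalSpace.PseudoMetrizableSpace (Matrix (Fin n) (Fin n) ℂ) :=
  inferInstanceAs (TopologicalSpace.PseudoMetrizableSpace (Fin n → Fin n → ℂ))

instance matSC {n : ℕ} : SecondCountableTopology (Matrix (Fin n) (Fin n) ℂ) :=
  inferInstanceAs (SecondCountableTopology (Fin n → Fin n → ℂ))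

noncomputable def quadCLM {n : ℕ} (x : Fin n → ℂ) : Matrix (Fin n) (Fin n) ℂ →L[ℝ] ℂ :=
  LinearMap.toContinuousLinearMap
  { toFun := fun M => star x ⬝ᵥ (M *ᵥ x)
    map_add' := fun M N => by simp [Matrix.add_mulVec, dotProduct_add]
    map_smul' := fun r M => by
      simp [Matrix.smul_mulVec, dotProduct_smul, Complex.real_smul] }

noncomputable def ctCLM (n : ℕ) : Matrix (Fin n) (Fin n) ℂ →L[ℝ] Matrix (Fin n) (Fin n) ℂ :=
  LinearMap.toContinuousLinearMap
  { toFun := fun M => Mᴴ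
    map_add' := fun M N => by simp
    map_smul' := fun r M => by
      ext i j; simp [Matrix.conjTranspose_apply, star_smul] }

noncomputable def hadLCLM {n : ℕ} (C : Matrix (Fin n) (Fin n) ℂ) :
    Matrix (Fin n) (Fin n) ℂ →L[ℝ] Matrix (Fin n) (Fin n) ℂ :=
  LinearMap.toContinuousLinearMap
  { toFun := fun M => C ⊙ M
    map_add' := fun M N => Matrix.hadamard_add _ _ _
    map_smul' := fun r M => by
      ext i j; simp [Matrix.hadamard_apply, Matrix.smul_apply, mul_smul_comm]; ring }

noncomputable def hadRCLM {n : ℕ} (C : Matrix (Fin n) (Fin n) ℂ) :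
    Matrix (Fin n) (Fin n) ℂ →L[ℝ] Matrix (Fin n) (Fin n) ℂ :=
  LinearMap.toContinuousLinearMap
  { toFun := fun M => M ⊙ C
    map_add' := fun M N => Matrix.add_hadamard _ _ _
    map_smul' := fun r M => by
      ext i j; simp [Matrix.hadamard_apply, Matrix.smul_apply, smul_mul_assoc]; ring }

@[simp] lemma quadCLM_apply {n : ℕ} (x : Fin n → ℂ) (M : Matrix (Fin n) (Fin n) ℂ) :
    quadCLM x M = star x ⬝ᵥ (M *ᵥ x) := rfl

@[simp] lemma ctCLM_apply {n : ℕ} (M : Matrix (Fin n) (Fin n) ℂ) : ctCLM n M = Mᴴ := rfl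

@[simp] lemma hadLCLM_apply {n : ℕ} (C M : Matrix (Fin n) (Fin n) ℂ) :
    hadLCLM C M = C ⊙ M := rfl

@[simp] lemma hadRCLM_apply {n : ℕ} (C M : Matrix (Fin n) (Fin n) ℂ) :
    hadRCLM C M = M ⊙ C := rfl

lemma integral_nonneg_complex {T : Type*} [MeasurableSpace T] (μ : Measure T)
    (f : T → ℂ) (hf : ∀ t, 0 ≤ f t) : 0 ≤ ∫ t, f t ∂μ := by
  have h1 : ∀ t, f t = ((f t).re : ℂ) := by
    intro t
    have := (Complex.le_def.mp (hf t)).2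
    exact Complex.ext rfl (by simpa using this.symm)
  have h2 : ∫ t, f t ∂μ = ∫ t, ((f t).re : ℂ) ∂μ :=
    integral_congr_ae (Filter.Eventually.of_forall h1)
  have h3 : ∫ t, ((f t).re : ℂ) ∂μ = ((∫ t, (f t).re ∂μ : ℝ) : ℂ) :=
    Complex.ofRealLI.integral_comp_comm _
  rw [h2, h3, Complex.zero_le_real]
  exact integral_nonneg fun t => (Complex.le_def.mp (hf t)).1

theorem chebyshev_hadamard_integral {n : ℕ} {T : Type*} [TopologicalSpace T] [CompactSpace T]
    [T2Space T] [MeasurableSpace T] [BorelSpace T] (μ : Measure T) [μ.Regular]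
    (A B : T → Matrix (Fin n) (Fin n) ℂ) (hA : Continuous A) (hB : Continuous B)
    (hsync : ∀ s t : T, ((A t - A s) ⊙ (B t - B s)).PosSemidef)
    (α : T → ℝ) (hα0 : ∀ t, 0 ≤ α t) (hαm : Measurable α) (hαi : Integrable α μ) :
    ((∫ s, α s ∂μ) • (∫ t, α t • (A t ⊙ B t) ∂μ) -
      (∫ t, α t • A t ∂μ) ⊙ (∫ s, α s • B s ∂μ)).PosSemidef := by
  set IA := ∫ t, α t • A t ∂μ with hIA
  set IB := ∫ s, α s • B s ∂μ with hIB
  set IH := ∫ t, α t • (A t ⊙ B t) ∂μ with hIH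
  set c := ∫ s, α s ∂μ with hc
  -- continuity helpers
  have hcont_had : ∀ {A' B' : T → Matrix (Fin n) (Fin n) ℂ}, Continuous A' → Continuous B' →
      Continuous fun t => A' t ⊙ B' t := fun hA' hB' =>
    continuous_matrix fun i j => (hA'.matrix_elem i j).mul (hB'.matrix_elem i j)
  have memtop : ∀ {f : T → Matrix (Fin n) (Fin n) ℂ}, Continuous f → MemLp f ⊤ μ := by
    intro f hf
    obtain ⟨Cb, hCb⟩ := (isCompact_range hf).isBounded.exists_norm_le
    exact memLp_top_of_bound hf.aestronglyMeasurable Cb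
      (Filter.Eventually.of_forall fun t => hCb _ (Set.mem_range_self t))
  have int1 : ∀ {f : T → Matrix (Fin n) (Fin n) ℂ}, Continuous f →
      Integrable (fun t => α t • f t) μ := fun hf => hαi.smul_of_top_left (memtop hf)
  have intA : Integrable (fun t => α t • A t) μ := int1 hA
  have intB : Integrable (fun t => α t • B t) μ := int1 hB
  have intH : Integrable (fun t => α t • (A t ⊙ B t)) μ := int1 (hcont_had hA hB)
  have intC : ∀ s, Integrable (fun t => (α s * α t) • ((A t - A s) ⊙ (B t - B s))) μ := by
    intro s
    have h : (fun t => (α s * α t) • ((A t - A s) ⊙ (B t - B s))) =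
        fun t => α s • (α t • ((A t - A s) ⊙ (B t - B s))) := funext fun t => mul_smul _ _ _
    rw [h]
    exact (int1 (hcont_had (hA.sub continuous_const) (hB.sub continuous_const))).smul (α s)
  -- pointwise expansion
  have expand : ∀ s t, (α s * α t) • ((A t - A s) ⊙ (B t - B s)) =
      α s • (α t • (A t ⊙ B t)) - (α t • A t) ⊙ (α s • B s) - (α s • A s) ⊙ (α t • B t)
        + α t • (α s • (A s ⊙ B s)) := by
    intro s t
    ext i j
    simp only [Matrix.smul_apply, Matrix.hadamard_apply, Matrix.sub_apply, Matrix.add_apply,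
      Complex.real_smul, Complex.ofReal_mul]
    ring
  -- inner integral
  have inner : ∀ s, (∫ t, (α s * α t) • ((A t - A s) ⊙ (B t - B s)) ∂μ) =
      α s • IH - IA ⊙ (α s • B s) - (α s • A s) ⊙ IB + c • (α s • (A s ⊙ B s)) := by
    intro s
    have i1 : Integrable (fun t => α s • (α t • (A t ⊙ B t))) μ := intH.smul (α s)
    have i2 : Integrable (fun t => (α t • A t) ⊙ (α s • B s)) μ := by
      exact (hadRCLM (α s • B s)).integrable_comp intA
    have i3 : Integrable (fun t => (α s • A s) ⊙ (α t • B t)) μ := by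
      exact (hadLCLM (α s • A s)).integrable_comp intB
    have i4 : Integrable (fun t => α t • (α s • (A s ⊙ B s))) μ := hαi.smul_const _
    have i12 : Integrable (fun t => α s • (α t • (A t ⊙ B t)) - (α t • A t) ⊙ (α s • B s)) μ :=
      i1.sub i2
    have i123 : Integrable (fun t => α s • (α t • (A t ⊙ B t)) - (α t • A t) ⊙ (α s • B s)
        - (α s • A s) ⊙ (α t • B t)) μ := i12.sub i3
    calc ∫ t, (α s * α t) • ((A t - A s) ⊙ (B t - B s)) ∂μ
        = ∫ t, (α s • (α t • (A t ⊙ B t)) - (α t • A t) ⊙ (α s • B s)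
            - (α s • A s) ⊙ (α t • B t) + α t • (α s • (A s ⊙ B s))) ∂μ := by
          simp_rw [expand s]
      _ = α s • IH - IA ⊙ (α s • B s) - (α s • A s) ⊙ IB + c • (α s • (A s ⊙ B s)) := by
          have e1 : ∫ t, α s • (α t • (A t ⊙ B t)) ∂μ = α s • IH := by
            rw [integral_smul, hIH]
          have e2 : ∫ t, (α t • A t) ⊙ (α s • B s) ∂μ = IA ⊙ (α s • B s) := by
            have h := (hadRCLM (α s • B s)).integral_comp_comm intA
            change ∫ t, (α t • A t) ⊙ (α s • B s) ∂μ = (∫ t, α t • A t ∂μ) ⊙ (α s • B s) at h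
            rw [h, hIA]
          have e3 : ∫ t, (α s • A s) ⊙ (α t • B t) ∂μ = (α s • A s) ⊙ IB := by
            have h := (hadLCLM (α s • A s)).integral_comp_comm intB
            change ∫ t, (α s • A s) ⊙ (α t • B t) ∂μ = (α s • A s) ⊙ (∫ t, α t • B t ∂μ) at h
            rw [h, hIB]
          have e4 : ∫ t, α t • (α s • (A s ⊙ B s)) ∂μ = c • (α s • (A s ⊙ B s)) := by
            rw [integral_smul_const, hc]
          rw [integral_add i123 i4, integral_sub i12 i3, integral_sub i1 i2, e1, e2, e3, e4]
  -- outer integrability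
  have j1 : Integrable (fun s => α s • IH) μ := hαi.smul_const IH
  have j2 : Integrable (fun s => IA ⊙ (α s • B s)) μ := by
    exact (hadLCLM IA).integrable_comp intB
  have j3 : Integrable (fun s => (α s • A s) ⊙ IB) μ := by
    exact (hadRCLM IB).integrable_comp intA
  have j12 : Integrable (fun s => α s • IH - IA ⊙ (α s • B s)) μ := j1.sub j2
  have j123 : Integrable (fun s => α s • IH - IA ⊙ (α s • B s) - (α s • A s) ⊙ IB) μ :=
    j12.sub j3
  have j4 : Integrable (fun s => c • (α s • (A s ⊙ B s))) μ := intH.smul c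
  have intg : Integrable (fun s => ∫ t, (α s * α t) • ((A t - A s) ⊙ (B t - B s)) ∂μ) μ := by
    have h : (fun s => ∫ t, (α s * α t) • ((A t - A s) ⊙ (B t - B s)) ∂μ) =
        fun s => α s • IH - IA ⊙ (α s • B s) - (α s • A s) ⊙ IB + c • (α s • (A s ⊙ B s)) :=
      funext inner
    rw [h]
    exact ((j1.sub j2).sub j3).add j4
  set D := ∫ s, ∫ t, (α s * α t) • ((A t - A s) ⊙ (B t - B s)) ∂μ ∂μ with hD
  have outer : D = (2 : ℝ) • (c • IH - IA ⊙ IB) := by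
    rw [hD]
    calc ∫ s, ∫ t, (α s * α t) • ((A t - A s) ⊙ (B t - B s)) ∂μ ∂μ
        = ∫ s, (α s • IH - IA ⊙ (α s • B s) - (α s • A s) ⊙ IB
            + c • (α s • (A s ⊙ B s))) ∂μ := by simp_rw [inner]
      _ = c • IH - IA ⊙ IB - IA ⊙ IB + c • IH := by
          have o1 : ∫ s, α s • IH ∂μ = c • IH := by rw [integral_smul_const, hc]
          have o2 : ∫ s, IA ⊙ (α s • B s) ∂μ = IA ⊙ IB := by
            have h := (hadLCLM IA).integral_comp_comm intB
            change ∫ s, IA ⊙ (α s • B s) ∂μ = IA ⊙ (∫ s, α s • B s ∂μ) at h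
            rw [h, hIB]
          have o3 : ∫ s, (α s • A s) ⊙ IB ∂μ = IA ⊙ IB := by
            have h := (hadRCLM IB).integral_comp_comm intA
            change ∫ s, (α s • A s) ⊙ IB ∂μ = (∫ s, α s • A s ∂μ) ⊙ IB at h
            rw [h, hIA]
          have o4 : ∫ s, c • (α s • (A s ⊙ B s)) ∂μ = c • IH := by
            rw [integral_smul, hIH]
          rw [integral_add j123 j4, integral_sub j12 j3, integral_sub j1 j2, o1, o2, o3, o4]
      _ = (2 : ℝ) • (c • IH - IA ⊙ IB) := by module
  -- Hermitianness of D
  have hptwise : ∀ s t, ((α s * α t) • ((A t - A s) ⊙ (B t - B s)))ᴴ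
      = (α s * α t) • ((A t - A s) ⊙ (B t - B s)) := by
    intro s t
    ext i j
    simp only [Matrix.conjTranspose_apply, Matrix.smul_apply, star_smul, star_trivial]
    rw [← Matrix.conjTranspose_apply, (hsync s t).1]
  have hinnerH : ∀ s, (∫ t, (α s * α t) • ((A t - A s) ⊙ (B t - B s)) ∂μ)ᴴ
      = ∫ t, (α s * α t) • ((A t - A s) ⊙ (B t - B s)) ∂μ := by
    intro s
    have h := (ctCLM n).integral_comp_comm (intC s)
    change ∫ t, ((α s * α t) • ((A t - A s) ⊙ (B t - B s)))ᴴ ∂μ = (∫ t, (α s * α t) • ((A t - A s) ⊙ (B t - B s)) ∂μ)ᴴ at h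
    rw [← h]
    exact integral_congr_ae (Filter.Eventually.of_forall fun t => hptwise s t)
  have hherm : D.IsHermitian := by
    have h := (ctCLM n).integral_comp_comm intg
    change ∫ s, (∫ t, (α s * α t) • ((A t - A s) ⊙ (B t - B s)) ∂μ)ᴴ ∂μ = (∫ s, ∫ t, (α s * α t) • ((A t - A s) ⊙ (B t - B s)) ∂μ ∂μ)ᴴ at h
    show Dᴴ = D
    rw [hD, ← h]
    exact integral_congr_ae (Filter.Eventually.of_forall hinnerH)
  -- quadratic form nonnegativity
  have hform : ∀ x : Fin n → ℂ, 0 ≤ star x ⬝ᵥ (D *ᵥ x) := by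
    intro x
    have h := (quadCLM x).integral_comp_comm intg
    change ∫ s, star x ⬝ᵥ ((∫ t, (α s * α t) • ((A t - A s) ⊙ (B t - B s)) ∂μ) *ᵥ x) ∂μ = star x ⬝ᵥ ((∫ s, ∫ t, (α s * α t) • ((A t - A s) ⊙ (B t - B s)) ∂μ ∂μ) *ᵥ x) at h
    rw [hD, ← h]
    refine integral_nonneg_complex μ _ fun s => ?_
    have h2 := (quadCLM x).integral_comp_comm (intC s)
    change ∫ t, star x ⬝ᵥ (((α s * α t) • ((A t - A s) ⊙ (B t - B s))) *ᵥ x) ∂μ = star x ⬝ᵥ ((∫ t, (α s * α t) • ((A t - A s) ⊙ (B t - B s)) ∂μ) *ᵥ x) at h2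
    rw [← h2]
    refine integral_nonneg_complex μ _ fun t => ?_
    have hq := (quadCLM x).map_smul (α s * α t) ((A t - A s) ⊙ (B t - B s))
    simp only [quadCLM_apply] at hq
    rw [hq, Complex.real_smul]
    refine mul_nonneg ?_ ?_
    · rw [Complex.zero_le_real]
      exact mul_nonneg (hα0 s) (hα0 t)
    · exact (hsync s t).dotProduct_mulVec_nonneg x
  -- conclude
  have hrepr : c • IH - IA ⊙ IB = (2⁻¹ : ℝ) • D := by
    rw [outer, smul_smul]
    norm_num
  rw [hrepr]
  rw [Matrix.posSemidef_iff_dotProduct_mulVec]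
  constructor
  · show ((2⁻¹ : ℝ) • D)ᴴ = (2⁻¹ : ℝ) • D
    have h : ((2⁻¹ : ℝ) • D)ᴴ = (2⁻¹ : ℝ) • Dᴴ := by
      ext i j
      simp [Matrix.conjTranspose_apply, star_smul]
    rw [h, hherm]
  · intro x
    have h := (quadCLM x).map_smul (2⁻¹ : ℝ) D
    simp only [quadCLM_apply] at h
    rw [h, Complex.real_smul]
    refine mul_nonneg ?_ (hform x)
    rw [Complex.zero_le_real]
    norm_num
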